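/- If π is a prime of ℤ[ω], n ≡ 1 (mod 3), π² divides n, and π does not divide r, then g(r, n) = 0. -/

import Mathlib

/-- The ring of Eisenstein integers `ℤ[ω]`, represented as pairs `a + b·ω`. -/
@[ext]
structure Eisenstein where
  a : ℤ
  b : ℤ

namespace Eisenstein

instance : Zero Eisenstein := ⟨⟨0, 0⟩⟩
instance : One Eisenstein := ⟨⟨1, 0⟩⟩
instance : Add Eisenstein := ⟨fun x y => ⟨x.a + y.a, x.b + y.b⟩⟩
instance : Neg Eisenstein := ⟨fun x => ⟨-x.a, -x.b⟩⟩
instance : Mul Eisenstein :=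
  ⟨fun x y => ⟨x.a * y.a - x.b * y.b, x.a * y.b + x.b * y.a - x.b * y.b⟩⟩

@[simp] lemma zero_a : (0 : Eisenstein).a = 0 := rfl
@[simp] lemma zero_b : (0 : Eisenstein).b = 0 := rfl
@[simp] lemma one_a : (1 : Eisenstein).a = 1 := rfl
@[simp] lemma one_b : (1 : Eisenstein).b = 0 := rfl
@[simp] lemma add_a (x y : Eisenstein) : (x + y).a = x.a + y.a := rfl
@[simp] lemma add_b (x y : Eisenstein) : (x + y).b = x.b + y.b := rfl
@[simp] lemma neg_a (x : Eisenstein) : (-x).a = -x.a := rfl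
@[simp] lemma neg_b (x : Eisenstein) : (-x).b = -x.b := rfl
@[simp] lemma mul_a (x y : Eisenstein) : (x * y).a = x.a * y.a - x.b * y.b := rfl
@[simp] lemma mul_b (x y : Eisenstein) : (x * y).b = x.a * y.b + x.b * y.a - x.b * y.b := rfl

instance : CommRing Eisenstein where
  add_assoc x y z := by ext <;> simp <;> ring
  zero_add x := by ext <;> simp
  add_zero x := by ext <;> simp
  add_comm x y := by ext <;> simp <;> ring
  neg_add_cancel x := by ext <;> simp
  mul_assoc x y z := by ext <;> simp <;> ring
  one_mul x := by ext <;> simp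
  mul_one x := by ext <;> simp
  left_distrib x y z := by ext <;> simp <;> ring
  right_distrib x y z := by ext <;> simp <;> ring
  mul_comm x y := by ext <;> simp <;> ring
  zero_mul x := by ext <;> simp
  mul_zero x := by ext <;> simp
  nsmul := nsmulRec
  zsmul := zsmulRec

/-- The primitive cube root of unity `ω` in `ℤ[ω]`. -/
def ω : Eisenstein := ⟨0, 1⟩

/-- Complex conjugation on `ℤ[ω]`. -/
def conj (x : Eisenstein) : Eisenstein := ⟨x.a - x.b, -x.b⟩

/-- The norm `N(a + bω) = a² − ab + b²`. -/
def norm (x : Eisenstein) : ℤ := x.a ^ 2 - x.a * x.b + x.b ^ 2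

/-- The embedding of `ℤ[ω]` into `ℂ`, with `ω ↦ e^{2πi/3}`. -/
noncomputable def toC (x : Eisenstein) : ℂ :=
  (x.a : ℂ) + (x.b : ℂ) * Complex.exp (2 * Real.pi * Complex.I / 3)

/-- `R` is a complete system of residues modulo `n` in `ℤ[ω]`. -/
def IsResidueSystem (n : Eisenstein) (R : Finset Eisenstein) : Prop :=
  ∀ x : Eisenstein, ∃! d, d ∈ R ∧ n ∣ x - d

/-- `ě(z) = exp(2πi(z + z̄))`. -/
noncomputable def eE (z : ℂ) : ℂ :=
  Complex.exp (2 * Real.pi * Complex.I * (z + (starRingEnd ℂ) z))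

/-- `χ` is the cubic residue symbol `(m/n)₃` on `ℤ[ω]` (with values `0, 1, ω, ω²` in `ℤ[ω]`):
it is completely multiplicative in both arguments and is determined at prime moduli `π ∤ 3` by
`(m/π)₃ ≡ m^{(N(π)−1)/3} (mod π)`, `(m/π)₃ ∈ {1, ω, ω²}` for `π ∤ m`, and `(m/π)₃ = 0` for
`π ∣ m`. -/
def IsCubicResidueSymbol (χ : Eisenstein → Eisenstein → Eisenstein) : Prop :=
  (∀ m₁ m₂ n, χ (m₁ * m₂) n = χ m₁ n * χ m₂ n) ∧
  (∀ m n₁ n₂, χ m (n₁ * n₂) = χ m n₁ * χ m n₂) ∧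
  (∀ m π : Eisenstein, Prime π → ¬ π ∣ 3 → π ∣ m → χ m π = 0) ∧
  (∀ m π : Eisenstein, Prime π → ¬ π ∣ 3 → ¬ π ∣ m →
    χ m π ∈ ({1, ω, ω ^ 2} : Set Eisenstein) ∧
      π ∣ m ^ ((norm π - 1) / 3).toNat - χ m π)

/-- The generalized cubic Gauss sum `g(r,n) = Σ_{x mod n} (x/n)₃ ě(rx/n)`, computed with respect
to a complete residue system `R` modulo `n`. -/
noncomputable def gSum (χ : Eisenstein → Eisenstein → Eisenstein) (r n : Eisenstein)
    (R : Finset Eisenstein) : ℂ :=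
  ∑ x ∈ R, toC (χ x n) * eE (toC r * toC x / toC n)

end Eisenstein

namespace Eisenstein

lemma three_def : (3 : Eisenstein) = ⟨3, 0⟩ := by
  have h : (3 : Eisenstein) = 1 + 1 + 1 := by norm_num
  rw [h]; ext <;> simp

@[simp] lemma conj_a (x : Eisenstein) : (conj x).a = x.a - x.b := rfl
@[simp] lemma conj_b (x : Eisenstein) : (conj x).b = -x.b := rfl

lemma sub_a (x y : Eisenstein) : (x - y).a = x.a - y.a := by
  rw [sub_eq_add_neg, sub_eq_add_neg]; simp

lemma sub_b (x y : Eisenstein) : (x - y).b = x.b - y.b := by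
  rw [sub_eq_add_neg, sub_eq_add_neg]; simp

lemma norm_mul (x y : Eisenstein) : norm (x * y) = norm x * norm y := by
  simp only [norm, mul_a, mul_b]; ring

lemma mul_conj (x : Eisenstein) : x * conj x = ⟨norm x, 0⟩ := by
  ext <;> simp [norm] <;> ring

lemma norm_nonneg (x : Eisenstein) : 0 ≤ norm x := by
  have := sq_nonneg (2 * x.a - x.b); have := sq_nonneg x.b; simp only [norm]; nlinarith

lemma norm_eq_zero_iff {x : Eisenstein} : norm x = 0 ↔ x = 0 := by
  constructor
  · intro h
    simp only [norm] at h
    have h1 := sq_nonneg (2 * x.a - x.b); have h2 := sq_nonneg x.b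
    have hb : x.b = 0 := by nlinarith
    have ha : x.a = 0 := by nlinarith [sq_nonneg x.a]
    ext <;> simp [ha, hb]
  · rintro rfl; simp [norm]

instance : Nontrivial Eisenstein :=
  ⟨⟨0, 1, fun h => by simpa using congrArg Eisenstein.a h⟩⟩

instance : NoZeroDivisors Eisenstein where
  eq_zero_or_eq_zero_of_mul_eq_zero {x y} h := by
    have : norm x * norm y = 0 := by rw [← norm_mul, h]; simp [norm]
    rcases mul_eq_zero.mp this with h' | h'
    · exact Or.inl (norm_eq_zero_iff.mp h')
    · exact Or.inr (norm_eq_zero_iff.mp h')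

instance : IsDomain Eisenstein := NoZeroDivisors.to_isDomain _

lemma norm_pos {x : Eisenstein} (hx : x ≠ 0) : 0 < norm x :=
  lt_of_le_of_ne (norm_nonneg x) (fun h => hx (norm_eq_zero_iff.mp h.symm))

lemma isUnit_of_norm_eq_one {x : Eisenstein} (h : norm x = 1) : IsUnit x :=
  IsUnit.of_mul_eq_one (a := x) (conj x) (by rw [mul_conj, h]; rfl)

lemma norm_eq_one_of_isUnit {x : Eisenstein} (h : IsUnit x) : norm x = 1 := by
  obtain ⟨u, rfl⟩ := h
  have h1 : norm (u : Eisenstein) * norm ((u⁻¹ : Eisensteinˣ) : Eisenstein) = 1 := by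
    rw [← norm_mul]; simp [norm]
  have h2 := norm_nonneg (u : Eisenstein)
  have h3 := Int.eq_one_of_mul_eq_one_right (by omega) h1
  omega

/-- Rounded division for the Euclidean algorithm. -/
def ediv (x y : Eisenstein) : Eisenstein :=
  let D := norm y
  let w := x * conj y
  ⟨(2 * w.a + D) / (2 * D), (2 * w.b + D) / (2 * D)⟩

/-- Remainder for the Euclidean algorithm. -/
def emod (x y : Eisenstein) : Eisenstein := x - y * ediv x y

lemma round_bound {u D : ℤ} (hD : 0 < D) :
    (2 * (u - (2 * u + D) / (2 * D) * D)) ^ 2 ≤ D ^ 2 := by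
  have h2D : (0:ℤ) < 2 * D := by omega
  have h1 := Int.mul_ediv_add_emod (2 * u + D) (2 * D)
  have h2 := Int.emod_nonneg (2 * u + D) (by omega : (2*D:ℤ) ≠ 0)
  have h3 := Int.emod_lt_of_pos (2 * u + D) h2D
  set q := (2 * u + D) / (2 * D) with hq
  set ρ := (2 * u + D) % (2 * D) with hρ
  have : 2 * (u - q * D) = ρ - D := by linarith
  rw [this]; nlinarith

lemma emod_norm_lt (x y : Eisenstein) (hy : y ≠ 0) : norm (emod x y) < norm y := by
  have hD : 0 < norm y := norm_pos hy
  set D := norm y with hDdef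
  set w := x * conj y with hw
  set q := ediv x y with hqdef
  have hqa : q.a = (2 * w.a + D) / (2 * D) := rfl
  have hqb : q.b = (2 * w.b + D) / (2 * D) := rfl
  set u' := w.a - q.a * D with hu'
  set v' := w.b - q.b * D with hv'
  have hbu : (2 * u') ^ 2 ≤ D ^ 2 := by rw [hu', hqa]; exact round_bound hD
  have hbv : (2 * v') ^ 2 ≤ D ^ 2 := by rw [hv', hqb]; exact round_bound hD
  have key : norm (emod x y) * D = u' ^ 2 - u' * v' + v' ^ 2 := by
    have h1 : (emod x y) * conj y = w - q * ⟨D, 0⟩ := by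
      simp only [emod, hw]; rw [hDdef, ← mul_conj y]; ring
    have h2 : norm ((emod x y) * conj y) = norm (emod x y) * D := by
      rw [norm_mul]; congr 1
      simp only [norm, conj_a, conj_b, hDdef]; ring
    rw [← h2, h1]
    simp only [norm, hu', hv', sub_a, sub_b, Eisenstein.mul_a, Eisenstein.mul_b]
    ring
  nlinarith [sq_nonneg (u' - v'), sq_nonneg (u' + v'), hD]

instance : EuclideanDomain Eisenstein where
  quotient := ediv
  quotient_zero a := by
    have : norm (0 : Eisenstein) = 0 := by simp [norm]
    ext <;> simp [ediv, this]
  remainder := emod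
  quotient_mul_add_remainder_eq a b := by simp only [emod]; ring
  r x y := (norm x).natAbs < (norm y).natAbs
  r_wellFounded := InvImage.wf (fun x => (norm x).natAbs) (Nat.lt_wfRel.wf)
  remainder_lt a b hb := by
    have h := emod_norm_lt a b hb
    have h1 := norm_nonneg (emod a b)
    omega
  mul_left_not_lt a b hb := by
    have h1 : norm (a * b) = norm a * norm b := norm_mul a b
    have h2 : 1 ≤ norm b := norm_pos hb
    have h3 := norm_nonneg a
    have h4 : norm a ≤ norm (a * b) := by rw [h1]; nlinarith
    simp only [not_lt]
    omega


/-! ### The complex embedding -/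

open Complex

/-- The complex cube root of unity. -/
noncomputable def ωC : ℂ := Complex.exp (2 * Real.pi * Complex.I / 3)

lemma toC_def (x : Eisenstein) : toC x = (x.a : ℂ) + (x.b : ℂ) * ωC := rfl

lemma ωC_pow_three : ωC ^ 3 = 1 := by
  rw [ωC, ← Complex.exp_nat_mul]
  rw [show ((3:ℕ) : ℂ) * (2 * Real.pi * Complex.I / 3) = 2 * Real.pi * Complex.I by
    push_cast; ring]
  exact Complex.exp_two_pi_mul_I

lemma two_pi_I_ne_zero : (2 : ℂ) * Real.pi * Complex.I ≠ 0 := by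
  simp [Real.pi_ne_zero, Complex.I_ne_zero]

lemma ωC_ne_one : ωC ≠ 1 := by
  intro h
  rw [ωC, Complex.exp_eq_one_iff] at h
  obtain ⟨k, hk⟩ := h
  have h1 : 2 * (Real.pi : ℂ) * Complex.I * (1 / 3) = 2 * (Real.pi : ℂ) * Complex.I * k := by
    linear_combination hk
  have h2 := mul_left_cancel₀ two_pi_I_ne_zero h1
  have h3 : (1 : ℂ) = k * 3 := by field_simp at h2; linear_combination h2
  have h4 : (1 : ℤ) = k * 3 := by exact_mod_cast h3
  omega

lemma ωC_sq : ωC ^ 2 = -1 - ωC := by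
  have h : (ωC - 1) * (ωC ^ 2 + ωC + 1) = 0 := by linear_combination ωC_pow_three
  rcases mul_eq_zero.mp h with h' | h'
  · exact absurd (sub_eq_zero.mp h') ωC_ne_one
  · linear_combination h'

lemma ωC_im_pos : 0 < ωC.im := by
  have h : (2 * (Real.pi : ℂ) * Complex.I / 3).im = 2 * Real.pi / 3 := by
    simp [Complex.div_im, Complex.mul_im, Complex.mul_re]
  rw [ωC, Complex.exp_im, h]
  have h1 : (2 * (Real.pi : ℂ) * Complex.I / 3).re = 0 := by
    simp [Complex.div_re, Complex.mul_im, Complex.mul_re]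
  rw [h1]
  simp only [Real.exp_zero, one_mul]
  apply Real.sin_pos_of_pos_of_lt_pi
  · positivity
  · nlinarith [Real.pi_pos]

lemma toC_add (x y : Eisenstein) : toC (x + y) = toC x + toC y := by
  simp only [toC_def, add_a, add_b]; push_cast; ring

lemma toC_mul (x y : Eisenstein) : toC (x * y) = toC x * toC y := by
  simp only [toC_def, mul_a, mul_b]; push_cast
  linear_combination (-(x.b : ℂ) * (y.b : ℂ)) * ωC_sq

lemma toC_zero : toC 0 = 0 := by simp [toC_def]

lemma toC_neg (x : Eisenstein) : toC (-x) = -toC x := by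
  simp only [toC_def, neg_a, neg_b]; push_cast; ring

lemma toC_sub (x y : Eisenstein) : toC (x - y) = toC x - toC y := by
  rw [sub_eq_add_neg, toC_add, toC_neg, sub_eq_add_neg]

lemma toC_one : toC 1 = 1 := by simp [toC_def]

lemma toC_injective : Function.Injective toC := by
  intro x y h
  simp only [toC_def] at h
  have him : ((x.b : ℂ) + - (y.b:ℂ)) * ωC = ((y.a : ℂ) - x.a) + 0 := by
    linear_combination h
  have h2 : (x.b - y.b : ℝ) * ωC.im = 0 := by
    have := congrArg Complex.im him
    simpa [sub_eq_add_neg] using this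
  have hb : x.b = y.b := by
    rcases mul_eq_zero.mp h2 with h' | h'
    · exact_mod_cast sub_eq_zero.mp (by exact_mod_cast h')
    · exact absurd h' (ne_of_gt ωC_im_pos)
  have ha : (x.a : ℂ) = y.a := by
    rw [hb] at h
    exact add_right_cancel h
  ext
  · exact_mod_cast ha
  · exact hb

lemma toC_ne_zero {x : Eisenstein} (hx : x ≠ 0) : toC x ≠ 0 := by
  intro h; exact hx (toC_injective (by rw [h, toC_zero]))

lemma toC_conj (x : Eisenstein) : toC (conj x) = (starRingEnd ℂ) (toC x) := by
  have hstar : (starRingEnd ℂ) ωC = ωC ^ 2 := by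
    have h1 : (starRingEnd ℂ) ωC * ωC = 1 := by
      rw [ωC, ← Complex.exp_conj, ← Complex.exp_add]
      rw [show (starRingEnd ℂ) (2 * Real.pi * Complex.I / 3) + 2 * Real.pi * Complex.I / 3 = 0
        by simp [map_div₀, map_mul, map_ofNat, Complex.conj_I, Complex.conj_ofReal]; ring]
      exact Complex.exp_zero
    have h2 : ωC ^ 2 * ωC = 1 := by rw [← pow_succ]; exact ωC_pow_three
    have hω : ωC ≠ 0 := by
      intro h; rw [h] at h2; simpa using h2
    exact mul_right_cancel₀ hω (h1.trans h2.symm)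
  simp only [toC_def, conj_a, conj_b, map_add, map_mul]
  rw [hstar]
  push_cast
  simp only [map_intCast]
  linear_combination (-(x.b : ℂ)) * ωC_sq

lemma toC_intpair (k : ℤ) : toC ⟨k, 0⟩ = (k : ℂ) := by simp [toC_def]

lemma toC_mul_conj (x : Eisenstein) : toC x * toC (conj x) = ((norm x : ℤ) : ℂ) := by
  rw [← toC_mul, mul_conj, toC_intpair]

/-! ### Properties of `eE` -/

lemma eE_add (z w : ℂ) : eE (z + w) = eE z * eE w := by
  rw [eE, eE, eE, ← Complex.exp_add, map_add]
  congr 1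
  ring

lemma trace_toC (t : Eisenstein) :
    toC t + (starRingEnd ℂ) (toC t) = ((2 * t.a - t.b : ℤ) : ℂ) := by
  rw [← toC_conj, ← toC_add]
  rw [show t + conj t = ⟨2 * t.a - t.b, 0⟩ by ext <;> simp <;> ring]
  exact toC_intpair _

lemma eE_int (t : Eisenstein) : eE (toC t) = 1 := by
  rw [eE, trace_toC]
  rw [show 2 * (Real.pi : ℂ) * Complex.I * ((2 * t.a - t.b : ℤ) : ℂ)
      = ((2 * t.a - t.b : ℤ) : ℂ) * (2 * Real.pi * Complex.I) by ring]
  exact Complex.exp_int_mul_two_pi_mul_I _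

lemma eE_eq_one_div {w : Eisenstein} {N : ℤ} (hN : N ≠ 0)
    (h : eE (toC w / (N : ℂ)) = 1) : N ∣ 2 * w.a - w.b := by
  have hNC : (N : ℂ) ≠ 0 := Int.cast_ne_zero.mpr hN
  rw [eE] at h
  have harg : toC w / (N : ℂ) + (starRingEnd ℂ) (toC w / (N : ℂ))
      = ((2 * w.a - w.b : ℤ) : ℂ) / N := by
    rw [map_div₀, map_intCast, ← add_div, trace_toC]
  rw [harg, Complex.exp_eq_one_iff] at h
  obtain ⟨k, hk⟩ := h
  have h1 : 2 * (Real.pi : ℂ) * Complex.I * (((2 * w.a - w.b : ℤ) : ℂ) / N)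
      = 2 * (Real.pi : ℂ) * Complex.I * (k : ℂ) := by rw [hk]; ring
  have h2 := mul_left_cancel₀ two_pi_I_ne_zero h1
  field_simp at h2
  have hint : (2 * w.a - w.b : ℤ) = k * N := by rw [mul_comm k N]; exact_mod_cast h2
  exact ⟨k, by rw [hint]; ring⟩

/-! ### Cube roots of unity and the cubic symbol -/

@[simp] lemma ω_a : ω.a = 0 := rfl
@[simp] lemma ω_b : ω.b = 1 := rfl

lemma ω_sq_def : (ω ^ 2 : Eisenstein) = ⟨-1, -1⟩ := by
  rw [sq]; ext <;> simp

lemma conj_ne_zero {x : Eisenstein} (hx : x ≠ 0) : conj x ≠ 0 := by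
  intro h
  apply hx
  have ha := congrArg Eisenstein.a h
  have hb := congrArg Eisenstein.b h
  simp at ha hb
  ext <;> simp <;> omega

lemma isUnit_cubeRoot {ζ : Eisenstein} (h : ζ ∈ ({1, ω, ω ^ 2} : Set Eisenstein)) :
    IsUnit ζ := by
  simp only [Set.mem_insert_iff, Set.mem_singleton_iff] at h
  rcases h with rfl | rfl | rfl
  · exact isUnit_one
  · exact IsUnit.of_mul_eq_one (a := ω) ⟨-1, -1⟩ (by ext <;> simp)
  · exact IsUnit.of_mul_eq_one (a := ω ^ 2) ω (by rw [sq]; ext <;> simp)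

lemma dvd_three_of_norm_three {δ : Eisenstein} (h : norm δ = 3) : δ ∣ 3 :=
  ⟨conj δ, by rw [mul_conj, h, three_def]⟩

lemma cube_root_eq {p : Eisenstein} (hp : Prime p) (h3 : ¬ p ∣ 3) {ζ₁ ζ₂ : Eisenstein}
    (h1 : ζ₁ ∈ ({1, ω, ω ^ 2} : Set Eisenstein)) (h2 : ζ₂ ∈ ({1, ω, ω ^ 2} : Set Eisenstein))
    (hd : p ∣ ζ₁ - ζ₂) : ζ₁ = ζ₂ := by
  simp only [Set.mem_insert_iff, Set.mem_singleton_iff] at h1 h2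
  rcases h1 with rfl | rfl | rfl <;> rcases h2 with rfl | rfl | rfl <;>
    first
      | rfl
      | exact absurd (hd.trans (dvd_three_of_norm_three
          (by simp [norm, sub_a, sub_b, ω_sq_def]))) h3

lemma mul_omega_a (z : Eisenstein) : (z * ω).a = -z.b := by simp

lemma mul_omega_b (z : Eisenstein) : (z * ω).b = z.a - z.b := by simp

lemma three_mul_a (z : Eisenstein) : ((3 : Eisenstein) * z).a = 3 * z.a := by
  rw [three_def]; simp

lemma three_mul_b (z : Eisenstein) : ((3 : Eisenstein) * z).b = 3 * z.b := by
  rw [three_def]; simp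

lemma intpair_dvd {N : ℤ} {z : Eisenstein} (ha : N ∣ z.a) (hb : N ∣ z.b) :
    (⟨N, 0⟩ : Eisenstein) ∣ z := by
  obtain ⟨p1, hp1⟩ := ha
  obtain ⟨p2, hp2⟩ := hb
  refine ⟨⟨p1, p2⟩, ?_⟩
  ext <;> simp [hp1, hp2]

section Chi

variable {χ : Eisenstein → Eisenstein → Eisenstein}

lemma chi_prime_congr (hχ : IsCubicResidueSymbol χ) {p x y : Eisenstein} (hp : Prime p) (h3 : ¬ p ∣ 3)
    (hxy : p ∣ x - y) : χ x p = χ y p := by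
  by_cases hx : p ∣ x
  · have hy : p ∣ y := by
      have h1 := dvd_sub hx hxy
      rwa [show x - (x - y) = y by ring] at h1
    rw [hχ.2.2.1 x p hp h3 hx, hχ.2.2.1 y p hp h3 hy]
  · have hy : ¬ p ∣ y := by
      intro h
      apply hx
      have h1 := dvd_add h hxy
      rwa [show y + (x - y) = x by ring] at h1
    obtain ⟨hmem1, hcong1⟩ := hχ.2.2.2 x p hp h3 hx
    obtain ⟨hmem2, hcong2⟩ := hχ.2.2.2 y p hp h3 hy
    set e := ((norm p - 1) / 3).toNat with he
    have hpow : p ∣ x ^ e - y ^ e := hxy.trans (sub_dvd_pow_sub_pow x y e)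
    have hdiff : p ∣ χ x p - χ y p := by
      have h1 : χ x p - χ y p = (x ^ e - y ^ e) - (x ^ e - χ x p) + (y ^ e - χ y p) := by
        ring
      rw [h1]
      exact dvd_add (dvd_sub hpow hcong1) hcong2
    exact cube_root_eq hp h3 hmem1 hmem2 hdiff

lemma chi_unit_one (hχ : IsCubicResidueSymbol χ) {x u : Eisenstein} (hx : x ≠ 0) (hu : IsUnit u) : χ x u = 1 := by
  have h30 : (3 : Eisenstein) ≠ 0 := by
    intro h
    have := congrArg Eisenstein.a (three_def ▸ h)
    simp at this
  have hz : (3 : Eisenstein) * x ≠ 0 := mul_ne_zero h30 hx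
  set c : Eisenstein := 1 + (3 * x) * conj (3 * x) with hcdef
  have hcval : c = ⟨1 + norm (3 * x), 0⟩ := by
    rw [hcdef, mul_conj]
    ext <;> simp
  have hNz : 1 ≤ norm (3 * x) := norm_pos hz
  have hnormc : norm c = (1 + norm (3 * x)) ^ 2 := by
    rw [hcval]; simp [norm]
  have hca : c.a = 1 + norm (3 * x) := by rw [hcval]
  have hc0 : c ≠ 0 := by
    intro h
    rw [h] at hca
    simp at hca
    omega
  have hcu : ¬ IsUnit c := by
    intro h
    have h1 := norm_eq_one_of_isUnit h
    rw [hnormc] at h1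
    nlinarith
  obtain ⟨p, hirr, hpc⟩ := WfDvdMonoid.exists_irreducible_factor hcu hc0
  have hp : Prime p := UniqueFactorizationMonoid.irreducible_iff_prime.mp hirr
  have hpz : ¬ p ∣ 3 * x := by
    intro h
    apply hp.not_unit
    apply isUnit_of_dvd_one
    have h1 : p ∣ (3 * x) * conj (3 * x) := h.mul_right _
    have h2 : (1 : Eisenstein) = c - (3 * x) * conj (3 * x) := by rw [hcdef]; ring
    rw [h2]
    exact dvd_sub hpc h1
  have hp3 : ¬ p ∣ 3 := fun h => hpz (h.mul_right x)
  have hpx : ¬ p ∣ x := fun h => hpz (h.mul_left 3)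
  have hassoc : Associated p (u * p) := ⟨hu.unit, by rw [IsUnit.unit_spec]; ring⟩
  have hup : Prime (u * p) := hassoc.prime hp
  have hup3 : ¬ u * p ∣ 3 := fun h => hp3 ((dvd_mul_left p u).trans h)
  have hupx : ¬ u * p ∣ x := fun h => hpx ((dvd_mul_left p u).trans h)
  obtain ⟨hm1, hc1⟩ := hχ.2.2.2 x p hp hp3 hpx
  obtain ⟨hm2, hc2⟩ := hχ.2.2.2 x (u * p) hup hup3 hupx
  have hnorm : norm (u * p) = norm p := by
    rw [norm_mul, norm_eq_one_of_isUnit hu, one_mul]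
  rw [hnorm] at hc2
  have hdiff : p ∣ χ x (u * p) - χ x p := by
    set e := ((norm p - 1) / 3).toNat with he
    have h1 : χ x (u * p) - χ x p
        = (x ^ e - χ x p) - (x ^ e - χ x (u * p)) := by ring
    rw [h1]
    exact dvd_sub hc1 ((dvd_mul_left p u).trans hc2)
  have heq : χ x (u * p) = χ x p := cube_root_eq hp hp3 hm2 hm1 hdiff
  have hh : χ x u * χ x p = χ x p := by rw [← hχ.2.1]; exact heq
  have h0 : χ x p ≠ 0 := (isUnit_cubeRoot hm1).ne_zero
  exact mul_right_cancel₀ h0 (by rw [hh, one_mul])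

lemma chi_congr (hχ : IsCubicResidueSymbol χ) (d : Eisenstein) :
    ∀ x y : Eisenstein, IsCoprime (3 : Eisenstein) d → x ≠ 0 → y ≠ 0 → d ∣ x - y →
      χ x d = χ y d := by
  induction d using UniqueFactorizationMonoid.induction_on_prime with
  | h₁ =>
    intro x y _ _ _ hd
    obtain rfl : x = y := sub_eq_zero.mp (zero_dvd_iff.mp hd)
    rfl
  | h₂ u hu =>
    intro x y _ hx hy _
    rw [chi_unit_one hχ hx hu, chi_unit_one hχ hy hu]
  | h₃ a p ha hp ih =>
    intro x y hcop hx hy hd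
    have hp3 : ¬ p ∣ 3 := fun h =>
      hp.not_unit (hcop.isUnit_of_dvd' h (dvd_mul_right p a))
    have hpd : p ∣ x - y := (dvd_mul_right p a).trans hd
    have had : a ∣ x - y := (dvd_mul_left a p).trans hd
    rw [hχ.2.1 x p a, hχ.2.1 y p a, chi_prime_congr hχ hp hp3 hpd,
      ih x y hcop.of_mul_right_right hx hy had]

end Chi

end Eisenstein

open Eisenstein in
/-- If `π` is prime, `n ≡ 1 (mod 3)`, `π² ∣ n` and `π ∤ r`, then `g(r,n) = 0`. -/
theorem statement_13 (χ : Eisenstein → Eisenstein → Eisenstein)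
    (hχ : IsCubicResidueSymbol χ) (π r n : Eisenstein) (hπ : Prime π)
    (hn : (3 : Eisenstein) ∣ n - 1) (h2 : π ^ 2 ∣ n) (hr : ¬ π ∣ r)
    (R : Finset Eisenstein) (hR : IsResidueSystem n R) :
    gSum χ r n R = 0 := by
  classical
  -- `n ≠ 0`
  have hn0 : n ≠ 0 := by
    rintro rfl
    obtain ⟨c, hc⟩ := hn
    have hca := congrArg Eisenstein.a hc
    rw [three_def] at hca
    simp at hca
    omega
  have hπ0 : π ≠ 0 := hπ.ne_zero
  -- `π ∤ 3`
  have hπ3 : ¬ π ∣ 3 := by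
    intro h3
    have hfac : (3 : Eisenstein) = ⟨1, -1⟩ * ⟨2, 1⟩ := by rw [three_def]; ext <;> simp
    have hlam : π ∣ (⟨1, -1⟩ : Eisenstein) := by
      rcases hπ.2.2 _ _ (hfac ▸ h3) with h | h
      · exact h
      · have h21 : (⟨2, 1⟩ : Eisenstein) = ⟨1, -1⟩ * ⟨1, 1⟩ := by ext <;> simp
        rcases hπ.2.2 _ _ (h21 ▸ h) with h' | h'
        · exact h'
        · exact absurd (isUnit_of_dvd_unit h'
            (isUnit_of_norm_eq_one (by simp [Eisenstein.norm]))) hπ.not_unit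
    obtain ⟨c, hc⟩ := hlam
    have hnormeq : Eisenstein.norm π * Eisenstein.norm c = 3 := by
      have hthis := congrArg Eisenstein.norm hc
      rw [Eisenstein.norm_mul] at hthis
      rw [show Eisenstein.norm ⟨1, -1⟩ = 3 from by norm_num [Eisenstein.norm]] at hthis
      exact hthis.symm
    have hπ2 : 2 ≤ Eisenstein.norm π := by
      have h1 := Eisenstein.norm_pos hπ0
      have h1' : Eisenstein.norm π ≠ 1 := fun h => hπ.not_unit (isUnit_of_norm_eq_one h)
      omega
    have hcn : Eisenstein.norm c ≠ 0 := by
      intro h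
      rw [h, mul_zero] at hnormeq
      omega
    have hcnn := Eisenstein.norm_nonneg c
    have hc1 : Eisenstein.norm c = 1 := by nlinarith
    have hπsq3 : (π ^ 2 : Eisenstein) ∣ 3 := by
      refine ⟨c ^ 2 * ⟨1, 1⟩, ?_⟩
      have hsq : (3 : Eisenstein) = ⟨1, -1⟩ * ⟨1, -1⟩ * ⟨1, 1⟩ := by
        rw [three_def]; ext <;> simp
      rw [hsq, hc]; ring
    have hπ21 : (π ^ 2 : Eisenstein) ∣ 1 := by
      have hd1 : π ^ 2 ∣ n - 1 := hπsq3.trans hn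
      have := dvd_sub h2 hd1
      rwa [show n - (n - 1) = 1 by ring] at this
    exact hπ.not_unit (isUnit_of_mul_isUnit_left
      (isUnit_of_dvd_one (by rwa [sq] at hπ21)))
  obtain ⟨m₀, hm₀⟩ := h2
  have hm₀0 : m₀ ≠ 0 := by
    rintro rfl
    rw [mul_zero] at hm₀
    exact hn0 hm₀
  have hπC : toC π ≠ 0 := toC_ne_zero hπ0
  have hm'C : toC (π * m₀) ≠ 0 := toC_ne_zero (mul_ne_zero hπ0 hm₀0)
  have hnC : toC n ≠ 0 := toC_ne_zero hn0
  have hnfacC : toC n = toC π * toC (π * m₀) := by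
    rw [← toC_mul, show π * (π * m₀) = π ^ 2 * m₀ by ring, ← hm₀]
  have hcop : IsCoprime (3 : Eisenstein) m₀ := by
    obtain ⟨k, hk⟩ := hn
    exact ⟨-k, π ^ 2, by linear_combination hk - hm₀⟩
  -- the twisting identity
  have main : ∀ s : Eisenstein,
      gSum χ r n R = eE (toC r * toC s / toC π) * gSum χ r n R := by
    intro s
    set t : Eisenstein := π * m₀ * s with ht
    have hspec : ∀ v : Eisenstein,
        (hR v).exists.choose ∈ R ∧ n ∣ v - (hR v).exists.choose :=
      fun v => (hR v).exists.choose_spec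
    set φ : Eisenstein → Eisenstein → Eisenstein :=
      fun t' x => (hR (x + t')).exists.choose with hφ
    have hmem : ∀ t' x : Eisenstein, φ t' x ∈ R := fun t' x => (hspec (x + t')).1
    have hinv : ∀ t' x : Eisenstein, x ∈ R → φ (-t') (φ t' x) = x := by
      intro t' x hx
      refine (hR (φ t' x + -t')).unique (hspec _) ⟨hx, ?_⟩
      have h1 := (hspec (x + t')).2
      rw [show (φ t' x + -t') - x = -((x + t') - φ t' x) by ring]
      exact dvd_neg.mpr h1
    -- pointwise identity
    have hpt : ∀ x ∈ R,
        toC (χ (φ t x) n) * eE (toC r * toC (φ t x) / toC n)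
          = eE (toC r * toC s / toC π) * (toC (χ x n) * eE (toC r * toC x / toC n)) := by
      intro x hx
      set y := φ t x with hy
      obtain ⟨w, hw⟩ := (hspec (x + t)).2
      have heq : y = x + π * m₀ * s - π ^ 2 * m₀ * w := by
        rw [ht] at hw
        linear_combination -hw - w * hm₀
      have hEarg : toC r * toC y / toC n
          = toC r * toC x / toC n + toC r * toC s / toC π + toC (r * -w) := by
        have hyC : toC y = toC x + toC (π * m₀) * toC s - toC n * toC w := by
          have heq2 : y = x + (π * m₀) * s - (π * (π * m₀)) * w := by linear_combination heq
          rw [heq2]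
          simp only [toC_sub, toC_add, toC_mul, hnfacC]
          try ring
        rw [hyC, toC_mul r (-w), toC_neg, hnfacC]
        field_simp [hπC, hm'C]
        ring
      have hEE : eE (toC r * toC y / toC n)
          = eE (toC r * toC s / toC π) * eE (toC r * toC x / toC n) := by
        rw [hEarg, eE_add, eE_add, eE_int]
        ring
      have hn2 : n = π * (π * m₀) := by rw [hm₀]; ring
      by_cases hpx : π ∣ x
      · have hpy : π ∣ y := by
          rw [heq]
          exact dvd_sub (dvd_add hpx ⟨m₀ * s, by ring⟩) ⟨π * m₀ * w, by ring⟩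
        have hx0 : χ x n = 0 := by
          rw [hn2, hχ.2.1, hχ.2.2.1 x π hπ hπ3 hpx, zero_mul]
        have hy0 : χ y n = 0 := by
          rw [hn2, hχ.2.1, hχ.2.2.1 y π hπ hπ3 hpy, zero_mul]
        rw [hx0, hy0, toC_zero]
        ring
      · have hπyx : π ∣ y - x := ⟨m₀ * s - π * m₀ * w, by linear_combination heq⟩
        have hpy : ¬ π ∣ y := by
          intro h
          apply hpx
          have h1 := dvd_sub h hπyx
          rwa [show y - (y - x) = x by ring] at h1
        have hx0 : x ≠ 0 := by rintro rfl; exact hpx (dvd_zero π)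
        have hy0 : y ≠ 0 := by
          intro h; rw [h] at hpy; exact hpy (dvd_zero π)
        have hχπ : χ y π = χ x π := chi_prime_congr hχ hπ hπ3 hπyx
        have hχm : χ y m₀ = χ x m₀ :=
          chi_congr hχ m₀ y x hcop hy0 hx0 ⟨π * s - π ^ 2 * w, by linear_combination heq⟩
        have hχn : χ y n = χ x n := by
          rw [hn2]
          simp only [hχ.2.1]
          rw [hχπ, hχm]
        rw [hχn, hEE]
        ring
    -- the reindexing bijection
    have hbij : (∑ x ∈ R, toC (χ x n) * eE (toC r * toC x / toC n))
        = ∑ x ∈ R, toC (χ (φ t x) n) * eE (toC r * toC (φ t x) / toC n) := by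
      refine Finset.sum_nbij' (φ (-t)) (φ t) (fun a _ => hmem (-t) a) (fun a _ => hmem t a)
        (fun a ha => ?_) (fun a ha => ?_) (fun a ha => ?_)
      · have h1 := hinv (-t) a ha
        rwa [neg_neg] at h1
      · exact hinv t a ha
      · have h1 := hinv (-t) a ha
        rw [neg_neg] at h1
        rw [h1]
    calc gSum χ r n R
        = ∑ x ∈ R, toC (χ (φ t x) n) * eE (toC r * toC (φ t x) / toC n) := hbij
      _ = ∑ x ∈ R, eE (toC r * toC s / toC π) * (toC (χ x n) * eE (toC r * toC x / toC n)) :=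
          Finset.sum_congr rfl hpt
      _ = eE (toC r * toC s / toC π) * gSum χ r n R := by
          rw [← Finset.mul_sum]; rfl
  -- conclude
  by_contra hg
  have hone : ∀ s : Eisenstein, eE (toC r * toC s / toC π) = 1 := by
    intro s
    have hs := main s
    exact (mul_right_cancel₀ hg (by rw [one_mul, ← hs])).symm
  have hconjC : toC (conj π) ≠ 0 := toC_ne_zero (conj_ne_zero hπ0)
  have hN0 : ((Eisenstein.norm π : ℤ) : ℂ) ≠ 0 := by
    have := Eisenstein.norm_pos hπ0
    exact_mod_cast (by omega : (Eisenstein.norm π : ℤ) ≠ 0)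
  have harg : ∀ s : Eisenstein,
      toC r * toC s / toC π = toC (r * s * conj π) / ((Eisenstein.norm π : ℤ) : ℂ) := by
    intro s
    rw [toC_mul, toC_mul, ← toC_mul_conj π]
    rw [eq_div_iff (mul_ne_zero hπC hconjC)]
    field_simp
  have hNdvd : ∀ s : Eisenstein,
      (Eisenstein.norm π : ℤ) ∣ 2 * (r * s * conj π).a - (r * s * conj π).b := by
    intro s
    apply eE_eq_one_div (by exact_mod_cast hN0)
    rw [← harg s]
    exact hone s
  have hd1 := hNdvd 1
  have hdω := hNdvd ω
  rw [show r * 1 * conj π = r * conj π by ring] at hd1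
  rw [show r * ω * conj π = (r * conj π) * ω by ring] at hdω
  rw [mul_omega_a, mul_omega_b] at hdω
  obtain ⟨k1, hk1⟩ := hd1
  obtain ⟨k2, hk2⟩ := hdω
  have hNa : (Eisenstein.norm π : ℤ) ∣ 3 * (r * conj π).a :=
    ⟨k1 - k2, by linear_combination hk1 - hk2⟩
  have hNb : (Eisenstein.norm π : ℤ) ∣ 3 * (r * conj π).b :=
    ⟨-k1 - 2 * k2, by linear_combination -hk1 - 2 * hk2⟩
  have hEdvd : (⟨Eisenstein.norm π, 0⟩ : Eisenstein) ∣ 3 * (r * conj π) := by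
    refine intpair_dvd ?_ ?_
    · rw [three_mul_a]; exact hNa
    · rw [three_mul_b]; exact hNb
  rw [← mul_conj] at hEdvd
  obtain ⟨q, hq⟩ := hEdvd
  have h3r : 3 * r = π * q :=
    mul_right_cancel₀ (conj_ne_zero hπ0) (by linear_combination hq)
  rcases hπ.2.2 3 r ⟨q, h3r⟩ with h | h
  · exact hπ3 h
  · exact hr h
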